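/- Let N ≥ 2, R > 0, c₀ ≥ 0, and set α = (N + √(N² + 4R²c₀))/2. Then the function v(x) = (|x|^{−α} − R^{−α}) x₁ satisfies Δv(x) − c₀ v(x) ≥ 0 for all x with 0 < |x| < R and x₁ > 0. -/

import Mathlib

/-- The Laplacian of `f : ℝ^N → ℝ` at `x`, as the sum of pure second derivatives. -/
noncomputable def lap {N : ℕ} (f : EuclideanSpace ℝ (Fin N) → ℝ)
    (x : EuclideanSpace ℝ (Fin N)) : ℝ :=
  ∑ i, iteratedFDeriv ℝ 2 f x ![EuclideanSpace.single i 1, EuclideanSpace.single i 1]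


open EuclideanSpace

variable {N : ℕ}

noncomputable abbrev Ety (N : ℕ) := EuclideanSpace ℝ (Fin N)

-- derivative of the basic function
lemma key_deriv (β C : ℝ) (i0 : Fin N) (y : Ety N) (hy : y ≠ 0) :
    HasFDerivAt (fun z : Ety N => (‖z‖^2) ^ β * z i0 - C * z i0)
      ((((‖y‖^2) ^ β - C) • (EuclideanSpace.proj i0 : Ety N →L[ℝ] ℝ))
        + ((2 * β * (‖y‖^2) ^ (β-1) * y i0) • (innerSL ℝ y : Ety N →L[ℝ] ℝ))) y := by
  have hn : (0:ℝ) < ‖y‖ := norm_pos_iff.mpr hy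
  have hA : (0:ℝ) < ‖y‖^2 := by positivity
  have h1 : HasFDerivAt (fun z : Ety N => ‖z‖^2) (2 • innerSL ℝ y) y :=
    (hasStrictFDerivAt_norm_sq y).hasFDerivAt
  have h2 : HasDerivAt (fun t : ℝ => t ^ β) (β * (‖y‖^2) ^ (β-1)) (‖y‖^2) :=
    Real.hasDerivAt_rpow_const (Or.inl hA.ne')
  have h3 := h2.comp_hasFDerivAt y h1
  have h4 : HasFDerivAt (fun z : Ety N => z i0) (EuclideanSpace.proj i0 : Ety N →L[ℝ] ℝ) y :=
by simpa using (EuclideanSpace.proj (𝕜 := ℝ) i0).hasFDerivAt (x := y)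
  have h5 := (h3.mul h4).sub (h4.const_mul C)
  refine h5.congr_fderiv ?_
  ext u
  simp [ContinuousLinearMap.smul_apply, smul_eq_mul, real_inner_comm]
  ring

lemma key_contdiff (β C : ℝ) (i0 : Fin N) (x : Ety N) (hx : x ≠ 0) :
    ContDiffAt ℝ 2 (fun z : Ety N => (‖z‖^2) ^ β * z i0 - C * z i0) x := by
  have hn : (0:ℝ) < ‖x‖ := norm_pos_iff.mpr hx
  have hA : (0:ℝ) < ‖x‖^2 := by positivity
  have h1 : ContDiffAt ℝ 2 (fun z : Ety N => ‖z‖^2) x := (contDiff_norm_sq ℝ).contDiffAt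
  have h2 : ContDiffAt ℝ 2 (fun t : ℝ => t ^ β) (‖x‖^2) :=
    Real.contDiffAt_rpow_const_of_ne hA.ne'
  have h3 := h2.comp x h1
  have h4 : ContDiffAt ℝ 2 (fun z : Ety N => z i0) x := by
    have := (EuclideanSpace.proj (𝕜 := ℝ) i0).contDiff (n := 2)
    exact this.contDiffAt.congr_of_eventuallyEq (by filter_upwards with z using rfl)
  exact (h3.mul h4).sub (contDiffAt_const.mul h4)

lemma key_second (β C : ℝ) (i0 i : Fin N) (x : Ety N) (hx : x ≠ 0) :
    iteratedFDeriv ℝ 2 (fun z : Ety N => (‖z‖^2) ^ β * z i0 - C * z i0) x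
      ![EuclideanSpace.single i 1, EuclideanSpace.single i 1]
    = 4*β*(β-1)*(‖x‖^2)^(β-2)*(x i0)*(x i)^2
      + 4*β*(‖x‖^2)^(β-1)*(if i = i0 then x i else 0)
      + 2*β*(‖x‖^2)^(β-1)*(x i0) := by
  set f : Ety N → ℝ := fun z : Ety N => (‖z‖^2) ^ β * z i0 - C * z i0 with hf
  set F' : Ety N → (Ety N →L[ℝ] ℝ) := fun y =>
    ((((‖y‖^2) ^ β - C) • (EuclideanSpace.proj i0 : Ety N →L[ℝ] ℝ))
        + ((2 * β * (‖y‖^2) ^ (β-1) * y i0) • (innerSL ℝ y : Ety N →L[ℝ] ℝ))) with hF'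
  have hn : (0:ℝ) < ‖x‖ := norm_pos_iff.mpr hx
  have hA : (0:ℝ) < ‖x‖^2 := by positivity
  have hnhds : {y : Ety N | y ≠ 0} ∈ nhds x := isOpen_compl_singleton.mem_nhds hx
  have heq : fderiv ℝ f =ᶠ[nhds x] F' :=
    Filter.eventually_of_mem hnhds (fun y hy => (key_deriv β C i0 y hy).fderiv)
  have hdf : DifferentiableAt ℝ (fderiv ℝ f) x := by
    have h2 := (key_contdiff β C i0 x hx).fderiv_right (m := 1) (by norm_num)
    exact h2.differentiableAt (by norm_num)
  set e : Ety N := EuclideanSpace.single i 1 with he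
  rw [iteratedFDeriv_two_apply]
  have hm0 : (![e, e] : Fin 2 → Ety N) 0 = e := rfl
  have hm1 : (![e, e] : Fin 2 → Ety N) 1 = e := rfl
  rw [hm0, hm1]
  -- swap application order
  have hswap : fderiv ℝ (fderiv ℝ f) x e e = fderiv ℝ (fun y => fderiv ℝ f y e) x e := by
    rw [fderiv_clm_apply hdf (differentiableAt_const e)]
    simp
  rw [hswap]
  -- replace by the explicit scalar function
  have heq2 : (fun y => fderiv ℝ f y e) =ᶠ[nhds x]
      (fun y : Ety N => ((‖y‖^2) ^ β - C) * (if i = i0 then (1:ℝ) else 0)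
        + 2 * β * (‖y‖^2) ^ (β-1) * y i0 * y i) := by
    filter_upwards [heq] with y hy
    rw [hy, hF']
    simp [he, EuclideanSpace.single_apply, real_inner_comm, eq_comm, EuclideanSpace.inner_single_right]
  rw [heq2.fderiv_eq]
  -- compute the derivative of the scalar function
  have h1 : HasFDerivAt (fun z : Ety N => ‖z‖^2) (2 • innerSL ℝ x) x :=
    (hasStrictFDerivAt_norm_sq x).hasFDerivAt
  have h2 : HasDerivAt (fun t : ℝ => t ^ β) (β * (‖x‖^2) ^ (β-1)) (‖x‖^2) :=
    Real.hasDerivAt_rpow_const (Or.inl hA.ne')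
  have h2' : HasDerivAt (fun t : ℝ => t ^ (β-1)) ((β-1) * (‖x‖^2) ^ (β-1-1)) (‖x‖^2) :=
    Real.hasDerivAt_rpow_const (Or.inl hA.ne')
  have h3 : HasFDerivAt (fun z : Ety N => (‖z‖^2) ^ β)
      ((β * (‖x‖^2) ^ (β-1)) • (2 • innerSL ℝ x)) x := by exact h2.comp_hasFDerivAt x h1
  have h3' : HasFDerivAt (fun z : Ety N => (‖z‖^2) ^ (β-1))
      (((β-1) * (‖x‖^2) ^ (β-2)) • (2 • innerSL ℝ x)) x := by
    rw [show β-2 = β-1-1 by ring]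
    exact h2'.comp_hasFDerivAt x h1
  have h4 : HasFDerivAt (fun z : Ety N => z i0) (EuclideanSpace.proj i0 : Ety N →L[ℝ] ℝ) x :=
    by simpa using (EuclideanSpace.proj (𝕜 := ℝ) i0).hasFDerivAt (x := x)
  have h4' : HasFDerivAt (fun z : Ety N => z i) (EuclideanSpace.proj i : Ety N →L[ℝ] ℝ) x :=
    by simpa using (EuclideanSpace.proj (𝕜 := ℝ) i).hasFDerivAt (x := x)
  have hφ := ((h3.sub_const C).mul_const (if i = i0 then (1:ℝ) else 0)).add
      (((h3'.const_mul (2*β)).mul h4).mul h4')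
  erw [hφ.fderiv]
  rcases eq_or_ne i i0 with h | h
  · subst h
    simp [he, EuclideanSpace.single_apply, real_inner_comm, smul_eq_mul, EuclideanSpace.inner_single_right]
    ring
  · simp [he, h, Ne.symm h, EuclideanSpace.single_apply, real_inner_comm, smul_eq_mul, EuclideanSpace.inner_single_right]
    ring

/-- With `α = (N + √(N² + 4R²c₀))/2`, the comparison function
`v(x) = (|x|^(-α) - R^(-α)) x₁` satisfies `Δv - c₀ v ≥ 0` on `{0 < |x| < R, x₁ > 0}`. -/
theorem stmt3 {N : ℕ} (hN : 2 ≤ N) (R c₀ : ℝ) (hR : 0 < R) (hc₀ : 0 ≤ c₀) (α : ℝ)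
    (hα : α = ((N : ℝ) + Real.sqrt ((N : ℝ) ^ 2 + 4 * R ^ 2 * c₀)) / 2)
    (v : EuclideanSpace ℝ (Fin N) → ℝ)
    (hv : ∀ x : EuclideanSpace ℝ (Fin N), v x = (‖x‖ ^ (-α) - R ^ (-α)) * x ⟨0, by omega⟩)
    (x : EuclideanSpace ℝ (Fin N)) (hx₀ : 0 < ‖x‖) (hxR : ‖x‖ < R) (hx₁ : 0 < x ⟨0, by omega⟩) :
    0 ≤ lap v x - c₀ * v x := by
  show 0 ≤ (∑ i, iteratedFDeriv ℝ 2 v x ![EuclideanSpace.single i 1, EuclideanSpace.single i 1]) - c₀ * v x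
  have hNR : (2:ℝ) ≤ (N:ℝ) := by exact_mod_cast hN
  have hsnn : 0 ≤ Real.sqrt ((N : ℝ) ^ 2 + 4 * R ^ 2 * c₀) := Real.sqrt_nonneg _
  have hs : Real.sqrt ((N : ℝ) ^ 2 + 4 * R ^ 2 * c₀) ^ 2 = (N : ℝ) ^ 2 + 4 * R ^ 2 * c₀ :=
    Real.sq_sqrt (by positivity)
  have hroot : α ^ 2 - N * α = R ^ 2 * c₀ := by rw [hα]; nlinarith [hs, hsnn]
  have hαpos : 0 < α := by rw [hα]; nlinarith [hsnn, hNR]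
  set i0 : Fin N := ⟨0, by omega⟩ with hi0
  set β : ℝ := -α/2 with hβ
  set C : ℝ := R ^ (-α) with hC
  have h2β : (2:ℝ) * β = -α := by rw [hβ]; ring
  have hxne : x ≠ 0 := by
    intro h; rw [h, norm_zero] at hx₀; exact lt_irrefl 0 hx₀
  have hveq : v = fun z : Ety N => (‖z‖^2) ^ β * z i0 - C * z i0 := by
    funext z
    rw [hv z]
    have : ‖z‖ ^ (-α) = (‖z‖^2) ^ β := by
      rw [← h2β, Real.rpow_mul (norm_nonneg z)]
      norm_num
    rw [this]; ring
  rw [hveq]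
  have hA : (0:ℝ) < ‖x‖^2 := by positivity
  have hterm : ∀ i : Fin N,
      iteratedFDeriv ℝ 2 (fun z : Ety N => (‖z‖^2) ^ β * z i0 - C * z i0) x
        ![EuclideanSpace.single i 1, EuclideanSpace.single i 1]
      = 4*β*(β-1)*(‖x‖^2)^(β-2)*(x i0)*(x i)^2
        + 4*β*(‖x‖^2)^(β-1)*(if i = i0 then x i else 0)
        + 2*β*(‖x‖^2)^(β-1)*(x i0) := fun i => key_second β C i0 i x hxne
  rw [Finset.sum_congr rfl (fun i _ => hterm i)]
  have hsum1 : ∑ i : Fin N, (x i)^2 = ‖x‖^2 := by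
    rw [EuclideanSpace.norm_eq, Real.sq_sqrt (by positivity)]
    simp [sq_abs]
  have hsum2 : ∑ i : Fin N, (if i = i0 then x i else 0) = x i0 := by
    simp [Finset.sum_ite_eq']
  have hsums : ∑ i : Fin N,
      (4*β*(β-1)*(‖x‖^2)^(β-2)*(x i0)*(x i)^2
        + 4*β*(‖x‖^2)^(β-1)*(if i = i0 then x i else 0)
        + 2*β*(‖x‖^2)^(β-1)*(x i0))
      = 4*β*(β-1)*(‖x‖^2)^(β-2)*(x i0)*(‖x‖^2)
        + 4*β*(‖x‖^2)^(β-1)*(x i0) + (N:ℝ)*(2*β*(‖x‖^2)^(β-1)*(x i0)) := by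
    rw [Finset.sum_add_distrib, Finset.sum_add_distrib, ← Finset.mul_sum, ← Finset.mul_sum,
      hsum1, hsum2, Finset.sum_const, Finset.card_univ]
    simp [nsmul_eq_mul]
  rw [hsums]
  have hr1 : (‖x‖^2)^(β-1) = (‖x‖^2)^(β-2) * (‖x‖^2) := by
    rw [← Real.rpow_add_one hA.ne' (β-2)]; ring_nf
  have hr0 : (‖x‖^2)^β = (‖x‖^2)^(β-1) * (‖x‖^2) := by
    rw [← Real.rpow_add_one hA.ne' (β-1)]; ring_nf
  have hx0pos : 0 < x i0 := hx₁
  have hppos : (0:ℝ) < (‖x‖^2)^(β-1) := Real.rpow_pos_of_pos hA _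
  have hCpos : (0:ℝ) < C := Real.rpow_pos_of_pos hR _
  have hAR : ‖x‖^2 ≤ R^2 := by exact pow_le_pow_left₀ (norm_nonneg x) hxR.le 2
  have hβα : 4*β^2 + 2*β*(N:ℝ) = α^2 - (N:ℝ)*α := by rw [hβ]; ring
  have h9 : 4*β*(β-1)*(‖x‖^2)^(β-2)*(x i0)*(‖x‖^2)
        + 4*β*(‖x‖^2)^(β-1)*(x i0) + (N:ℝ)*(2*β*(‖x‖^2)^(β-1)*(x i0))
        - c₀ * ((‖x‖^2)^β * x i0 - C * x i0)
      = (α^2 - (N:ℝ)*α - c₀*(‖x‖^2)) * ((‖x‖^2)^(β-1) * x i0) + c₀ * (C * x i0) := by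
    linear_combination (-(4*β*(β-1))*(x i0)) * hr1 - c₀ * (x i0) * hr0
      + ((‖x‖^2)^(β-1) * x i0) * hβα
  rw [h9, hroot]
  have h10 : (0:ℝ) ≤ R^2*c₀ - c₀*‖x‖^2 := by
    calc (0:ℝ) ≤ c₀ * (R^2 - ‖x‖^2) := mul_nonneg hc₀ (sub_nonneg.mpr hAR)
      _ = R^2*c₀ - c₀*‖x‖^2 := by ring
  exact add_nonneg (mul_nonneg h10 (mul_nonneg hppos.le hx0pos.le))
    (mul_nonneg hc₀ (mul_nonneg hCpos.le hx0pos.le))
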